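/- Let n ≥ 2 be an integer, α ∈ [0,n), and let g : ℝⁿ → [0,∞) be locally integrable. For ζ ∈ ℝⁿ and ρ > 0 define M^ρ_α g(ζ) = sup_{0 < ρ' < ρ} (ρ')^α ⨍_{B_{ρ'}(ζ)} g(y) dy and T^ρ_α g(ζ) = sup_{ρ' ≥ ρ} (ρ')^α ⨍_{B_{ρ'}(ζ)} g(y) dy. If ξ ∈ ℝⁿ, ρ > 0, λ > 0 and δ > 3^n, and if there exists z₂ ∈ B_ρ(ξ) with M_α g(z₂) ≤ λ, then the set {ζ ∈ B_ρ(ξ) : T^ρ_α g(ζ) > δλ} is empty; consequently, for every ζ ∈ B_ρ(ξ), M_α g(ζ) > δλ implies M^ρ_α g(ζ) > δλ. -/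

import Mathlib

open MeasureTheory ENNReal

/-- The fractional maximal function `M_α h (x) = sup_{ρ>0} ρ^α ⨍_{B_ρ(x)} |h|`,
valued in `ℝ≥0∞`. -/
noncomputable def fracMax (n : ℕ) (α : ℝ) (h : EuclideanSpace ℝ (Fin n) → ℝ)
    (x : EuclideanSpace ℝ (Fin n)) : ℝ≥0∞ :=
  ⨆ (ρ : ℝ) (_ : 0 < ρ),
    ENNReal.ofReal (ρ ^ α) * ⨍⁻ y in Metric.ball x ρ, ENNReal.ofReal |h y| ∂volume

/-- The truncated fractional maximal function
`M^ρ_α g (ζ) = sup_{0 < ρ' < ρ} (ρ')^α ⨍_{B_{ρ'}(ζ)} g`. -/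
noncomputable def truncFracMax (n : ℕ) (α ρ : ℝ) (g : EuclideanSpace ℝ (Fin n) → ℝ)
    (ζ : EuclideanSpace ℝ (Fin n)) : ℝ≥0∞ :=
  ⨆ (ρ' : ℝ) (_ : 0 < ρ') (_ : ρ' < ρ),
    ENNReal.ofReal (ρ' ^ α) * ⨍⁻ y in Metric.ball ζ ρ', ENNReal.ofReal |g y| ∂volume

/-- The tail fractional maximal function
`T^ρ_α g (ζ) = sup_{ρ' ≥ ρ} (ρ')^α ⨍_{B_{ρ'}(ζ)} g`. -/
noncomputable def tailFracMax (n : ℕ) (α ρ : ℝ) (g : EuclideanSpace ℝ (Fin n) → ℝ)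
    (ζ : EuclideanSpace ℝ (Fin n)) : ℝ≥0∞ :=
  ⨆ (ρ' : ℝ) (_ : ρ ≤ ρ'),
    ENNReal.ofReal (ρ' ^ α) * ⨍⁻ y in Metric.ball ζ ρ', ENNReal.ofReal |g y| ∂volume

lemma fracMax_key (n : ℕ) (hn : 1 ≤ n) (α : ℝ) (hα0 : 0 ≤ α)
    (g : EuclideanSpace ℝ (Fin n) → ℝ)
    (ζ z₂ : EuclideanSpace ℝ (Fin n)) (ρ' : ℝ) (hρ' : 0 < ρ')
    (hd : dist ζ z₂ ≤ 2 * ρ') :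
    ENNReal.ofReal (ρ' ^ α) * ⨍⁻ y in Metric.ball ζ ρ', ENNReal.ofReal |g y| ∂volume ≤
      ENNReal.ofReal ((3:ℝ) ^ n) *
        (ENNReal.ofReal ((3 * ρ') ^ α) *
          ⨍⁻ y in Metric.ball z₂ (3 * ρ'), ENNReal.ofReal |g y| ∂volume) := by
  have hsub : Metric.ball ζ ρ' ⊆ Metric.ball z₂ (3 * ρ') := by
    intro y hy
    have : dist y z₂ ≤ dist y ζ + dist ζ z₂ := dist_triangle _ _ _
    simp only [Metric.mem_ball] at hy ⊢
    nlinarith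
  set f : EuclideanSpace ℝ (Fin n) → ℝ≥0∞ := fun y => ENNReal.ofReal |g y| with hf
  have hvol : volume (Metric.ball z₂ (3 * ρ')) =
      ENNReal.ofReal ((3:ℝ) ^ n) * volume (Metric.ball ζ ρ') := by
    rw [Measure.addHaar_ball_mul_of_pos volume z₂ (by norm_num : (0:ℝ) < 3) ρ',
      Measure.addHaar_ball_center, finrank_euclideanSpace_fin,
      Measure.addHaar_ball_center volume ζ]
  have hv0 : volume (Metric.ball ζ ρ') ≠ 0 :=
    (Metric.measure_ball_pos volume ζ hρ').ne'
  have hc0 : ENNReal.ofReal ((3:ℝ) ^ n) ≠ 0 :=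
    ne_of_gt (ENNReal.ofReal_pos.2 (by positivity))
  have hct : ENNReal.ofReal ((3:ℝ) ^ n) ≠ ⊤ := ofReal_ne_top
  have havg : (⨍⁻ y in Metric.ball ζ ρ', f y ∂volume) ≤
      ENNReal.ofReal ((3:ℝ) ^ n) * ⨍⁻ y in Metric.ball z₂ (3 * ρ'), f y ∂volume := by
    rw [setLAverage_eq, setLAverage_eq, hvol]
    calc (∫⁻ y in Metric.ball ζ ρ', f y ∂volume) / volume (Metric.ball ζ ρ')
        ≤ (∫⁻ y in Metric.ball z₂ (3 * ρ'), f y ∂volume) / volume (Metric.ball ζ ρ') :=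
          ENNReal.div_le_div_right (lintegral_mono_set hsub) _
      _ = ENNReal.ofReal ((3:ℝ) ^ n) * (∫⁻ y in Metric.ball z₂ (3 * ρ'), f y ∂volume) /
            (ENNReal.ofReal ((3:ℝ) ^ n) * volume (Metric.ball ζ ρ')) :=
          (ENNReal.mul_div_mul_left _ _ hc0 hct).symm
      _ = ENNReal.ofReal ((3:ℝ) ^ n) * ((∫⁻ y in Metric.ball z₂ (3 * ρ'), f y ∂volume) /
            (ENNReal.ofReal ((3:ℝ) ^ n) * volume (Metric.ball ζ ρ'))) := by
          rw [mul_div_assoc]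
  have hr : ENNReal.ofReal (ρ' ^ α) ≤ ENNReal.ofReal ((3 * ρ') ^ α) := by
    apply ENNReal.ofReal_le_ofReal
    apply Real.rpow_le_rpow hρ'.le _ hα0
    nlinarith
  calc ENNReal.ofReal (ρ' ^ α) * ⨍⁻ y in Metric.ball ζ ρ', f y ∂volume
      ≤ ENNReal.ofReal ((3 * ρ') ^ α) *
          (ENNReal.ofReal ((3:ℝ) ^ n) * ⨍⁻ y in Metric.ball z₂ (3 * ρ'), f y ∂volume) :=
        mul_le_mul' hr havg
    _ = ENNReal.ofReal ((3:ℝ) ^ n) *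
          (ENNReal.ofReal ((3 * ρ') ^ α) * ⨍⁻ y in Metric.ball z₂ (3 * ρ'), f y ∂volume) := by
        ring

theorem tail_fracMax_levelset_empty (n : ℕ) (hn : 2 ≤ n) (α : ℝ) (hα0 : 0 ≤ α) (hα : α < n)
    (g : EuclideanSpace ℝ (Fin n) → ℝ) (hg0 : ∀ x, 0 ≤ g x)
    (hgloc : MeasureTheory.LocallyIntegrable g volume)
    (ξ : EuclideanSpace ℝ (Fin n)) (ρ lam δ : ℝ) (hρ : 0 < ρ) (hlam : 0 < lam)
    (hδ : (3 : ℝ) ^ n < δ)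
    (z₂ : EuclideanSpace ℝ (Fin n)) (hz₂ : z₂ ∈ Metric.ball ξ ρ)
    (hz₂M : fracMax n α g z₂ ≤ ENNReal.ofReal lam) :
    {ζ ∈ Metric.ball ξ ρ | ENNReal.ofReal (δ * lam) < tailFracMax n α ρ g ζ} = ∅ ∧
      ∀ ζ ∈ Metric.ball ξ ρ,
        ENNReal.ofReal (δ * lam) < fracMax n α g ζ →
          ENNReal.ofReal (δ * lam) < truncFracMax n α ρ g ζ := by
  -- the tail maximal function is bounded by `3^n * lam` on the ball
  have htail : ∀ ζ ∈ Metric.ball ξ ρ,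
      tailFracMax n α ρ g ζ ≤ ENNReal.ofReal ((3:ℝ) ^ n * lam) := by
    intro ζ hζ
    apply iSup₂_le
    intro ρ' hρρ'
    have hρ'pos : 0 < ρ' := lt_of_lt_of_le hρ hρρ'
    have hd : dist ζ z₂ ≤ 2 * ρ' := by
      have h1 : dist ζ z₂ ≤ dist ζ ξ + dist z₂ ξ := dist_triangle_right _ _ _
      simp only [Metric.mem_ball] at hζ hz₂
      nlinarith
    have hkey := fracMax_key n (by omega) α hα0 g ζ z₂ ρ' hρ'pos hd
    refine hkey.trans ?_
    have hterm : ENNReal.ofReal ((3 * ρ') ^ α) *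
        ⨍⁻ y in Metric.ball z₂ (3 * ρ'), ENNReal.ofReal |g y| ∂volume ≤
        fracMax n α g z₂ := by
      refine le_trans ?_ (le_iSup _ (3 * ρ'))
      exact le_iSup_of_le (by positivity) le_rfl
    calc ENNReal.ofReal ((3:ℝ) ^ n) *
          (ENNReal.ofReal ((3 * ρ') ^ α) *
            ⨍⁻ y in Metric.ball z₂ (3 * ρ'), ENNReal.ofReal |g y| ∂volume)
        ≤ ENNReal.ofReal ((3:ℝ) ^ n) * ENNReal.ofReal lam :=
          mul_le_mul_right (hterm.trans hz₂M) _
      _ = ENNReal.ofReal ((3:ℝ) ^ n * lam) := by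
          rw [← ENNReal.ofReal_mul (by positivity)]
  have h3lt : ENNReal.ofReal ((3:ℝ) ^ n * lam) < ENNReal.ofReal (δ * lam) :=
    (ENNReal.ofReal_lt_ofReal_iff (mul_pos (lt_trans (by positivity) hδ) hlam)).2 (by nlinarith)
  constructor
  · rw [Set.eq_empty_iff_forall_notMem]
    rintro ζ ⟨hζ, hlt⟩
    exact absurd h3lt (hlt.trans_le (htail ζ hζ)).asymm
  · intro ζ hζ hM
    have hsplit : fracMax n α g ζ ≤ truncFracMax n α ρ g ζ ⊔ tailFracMax n α ρ g ζ := by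
      apply iSup₂_le
      intro ρ' hρ'pos
      rcases lt_or_ge ρ' ρ with h | h
      · refine le_trans ?_ le_sup_left
        refine le_trans ?_ (le_iSup _ ρ')
        refine le_trans ?_ (le_iSup _ hρ'pos)
        exact le_iSup_of_le h le_rfl
      · refine le_trans ?_ le_sup_right
        refine le_trans ?_ (le_iSup _ ρ')
        exact le_iSup_of_le h le_rfl
    have := hM.trans_le hsplit
    rcases lt_sup_iff.mp this with h | h
    · exact h
    · exact absurd h ((htail ζ hζ).trans_lt h3lt).not_gt
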